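/- arXiv:2307.14284 — 2 statements merged into one kernel-verified Lean document; each statement's English description precedes it below -/
import Mathlib

section
/- Let C be a nonempty closed convex subset of the Euclidean space ℝⁿ with empty interior (equivalently, C is a closed convex nowhere dense subset). Then the distance function d_C(z) = infDist(z, C) is a submetry from ℝⁿ onto the half-line [0,∞): for every x ∈ ℝⁿ and every r > 0, the image d_C(B_r(x)) equals B_r(d_C(x)) ∩ [0,∞), i.e. the set of all s ≥ 0 with |s − d_C(x)| < r. -/
open Metric

local notation "E" n => EuclideanSpace ℝ (Fin n)

/-- Variational inequality for nearest point on a convex set. -/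
lemma nearest_inner_le {n : ℕ} {C : Set (EuclideanSpace ℝ (Fin n))}
    (hconv : Convex ℝ C) {y p : EuclideanSpace ℝ (Fin n)} (hp : p ∈ C)
    (hd : dist y p = Metric.infDist y C) :
    ∀ w ∈ C, inner ℝ (y - p) (w - p) ≤ (0 : ℝ) := by
  rw [← norm_eq_iInf_iff_real_inner_le_zero hconv hp]
  rw [Metric.infDist_eq_iInf] at hd
  simpa [dist_eq_norm] using hd

/-- Moving away from a convex set along the ray from the nearest point scales the
distance linearly. -/
lemma ray_infDist {n : ℕ} {C : Set (EuclideanSpace ℝ (Fin n))}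
    (hne : C.Nonempty) (hconv : Convex ℝ C) {y p : EuclideanSpace ℝ (Fin n)} (hp : p ∈ C)
    (hd : dist y p = Metric.infDist y C) {l : ℝ} (hl : 1 ≤ l) :
    Metric.infDist (p + l • (y - p)) C = l * dist y p := by
  have hvar := nearest_inner_le hconv hp hd
  set z := p + l • (y - p) with hz
  have hzp : dist z p = l * dist y p := by
    rw [dist_eq_norm, dist_eq_norm]
    simp only [hz, add_sub_cancel_left, norm_smul, Real.norm_eq_abs,
      abs_of_nonneg (by linarith : (0:ℝ) ≤ l)]
  have h1 : Metric.infDist z C ≤ l * dist y p := hzp ▸ Metric.infDist_le_dist_of_mem hp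
  have h2 : l * dist y p ≤ Metric.infDist z C := by
    have : Nonempty C := hne.to_subtype
    rw [Metric.infDist_eq_iInf]
    refine le_ciInf fun w => ?_
    obtain ⟨w, hw⟩ := w
    show l * dist y p ≤ dist z w
    have hiw := hvar w hw
    have hexp : dist z w ^ 2 = l ^ 2 * ‖y - p‖ ^ 2 - 2 * l * inner ℝ (y - p) (w - p)
        + ‖w - p‖ ^ 2 := by
      rw [dist_eq_norm]
      have : z - w = l • (y - p) - (w - p) := by rw [hz]; abel
      rw [this, @norm_sub_sq_real, norm_smul, real_inner_smul_left]
      simp [Real.norm_eq_abs, abs_of_nonneg (by linarith : (0:ℝ) ≤ l), mul_pow]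
      ring
    have hny : dist y p = ‖y - p‖ := dist_eq_norm y p
    have hl0 : (0:ℝ) ≤ l := by linarith
    have hkey : (l * ‖y - p‖) ^ 2 ≤ dist z w ^ 2 := by
      have h2 : 0 ≤ -(2 * l * inner ℝ (y - p) (w - p)) := by
        have := mul_nonneg (by linarith : (0:ℝ) ≤ 2 * l) (neg_nonneg.2 hiw)
        linarith [this, (by ring : 2 * l * -inner ℝ (y - p) (w - p)
          = -(2 * l * inner ℝ (y - p) (w - p)))]
      nlinarith [sq_nonneg (‖w - p‖)]
    rw [hny]
    exact (pow_le_pow_iff_left₀ (mul_nonneg hl0 (norm_nonneg _)) dist_nonneg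
      two_ne_zero).1 hkey
  linarith

/-- The distance function to a nonempty closed convex nowhere dense subset `C` of
Euclidean space is a submetry onto the half-line `[0, ∞)`: the image of any open ball
`B_r(x)` is the set of all `s ≥ 0` with `|s - d_C(x)| < r`. -/
theorem distance_to_convex_is_submetry {n : ℕ} (C : Set (EuclideanSpace ℝ (Fin n)))
    (hne : C.Nonempty) (hclosed : IsClosed C) (hconv : Convex ℝ C)
    (hint : interior C = ∅) :
    ∀ (x : EuclideanSpace ℝ (Fin n)) (r : ℝ), 0 < r →
      (fun z => Metric.infDist z C) '' Metric.ball x r =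
        {s : ℝ | 0 ≤ s ∧ |s - Metric.infDist x C| < r} := by
  intro x r hr
  ext s
  simp only [Set.mem_image, Set.mem_setOf_eq, Metric.mem_ball]
  constructor
  · rintro ⟨z, hz, rfl⟩
    refine ⟨Metric.infDist_nonneg, ?_⟩
    rw [abs_sub_lt_iff]
    constructor
    · have := Metric.infDist_le_infDist_add_dist (x := z) (y := x) (s := C)
      linarith [dist_comm z x]
    · have := Metric.infDist_le_infDist_add_dist (x := x) (y := z) (s := C)
      linarith [dist_comm x z]
  · rintro ⟨hs0, hsr⟩
    set d := Metric.infDist x C with hdd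
    rw [abs_sub_lt_iff] at hsr
    obtain ⟨hsr1, hsr2⟩ := hsr
    obtain ⟨p, hpC, hpd⟩ := hclosed.exists_infDist_eq_dist hne x
    rcases le_or_gt s d with hcase | hcase
    · -- move toward the nearest point
      rcases eq_or_lt_of_le hcase with rfl | hsd
      · exact ⟨x, by simpa using hr, rfl⟩
      have hd0 : 0 < d := lt_of_le_of_lt hs0 hsd
      set t : ℝ := (d - s) / d with ht
      have ht0 : 0 < t := div_pos (by linarith) hd0
      have ht1 : t ≤ 1 := by rw [ht, div_le_one hd0]; linarith
      set z := x + t • (p - x) with hz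
      have hdxp : dist x p = d := hpd.symm
      have hzx : dist z x = d - s := by
        rw [dist_eq_norm]
        simp only [hz, add_sub_cancel_left, norm_smul, Real.norm_eq_abs,
          abs_of_pos ht0]
        rw [show ‖p - x‖ = dist x p by rw [dist_eq_norm, norm_sub_rev], hdxp, ht]
        field_simp
      have hzp : dist z p = s := by
        rw [dist_eq_norm]
        have : z - p = (1 - t) • (x - p) := by
          rw [hz]; module
        rw [this, norm_smul, Real.norm_eq_abs, abs_of_nonneg (by linarith),
          show ‖x - p‖ = dist x p from dist_eq_norm x p, hdxp, ht]
        field_simp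
        ring
      refine ⟨z, by rw [hzx]; linarith, le_antisymm ?_ ?_⟩
      · rw [← hzp]; exact Metric.infDist_le_dist_of_mem hpC
      · have := Metric.infDist_le_infDist_add_dist (x := x) (y := z) (s := C)
        rw [dist_comm] at this
        rw [← hdd] at this
        rw [hzx] at this
        linarith
    · rcases eq_or_lt_of_le (Metric.infDist_nonneg (x := x) (s := C)) with hd0 | hd0
      · -- x is in C; use a nearby point outside C
        have hxC : x ∈ C := (hclosed.mem_iff_infDist_zero hne).2 hd0.symm
        have hs' : 0 < s := by linarith [hcase, hd0, hdd]
        set ε : ℝ := min s ((r - s) / 2) with hε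
        have hd00 : d = 0 := by rw [hdd, ← hd0]
        have hrs : s < r := by rw [hd00] at hsr2; linarith
        have hε0 : 0 < ε := lt_min hs' (by linarith)
        have hball : ¬ Metric.ball x ε ⊆ C := by
          intro h
          have : Metric.ball x ε ⊆ interior C :=
            (IsOpen.subset_interior_iff Metric.isOpen_ball).2 h
          rw [hint] at this
          exact this (Metric.mem_ball_self hε0)
        obtain ⟨y, hyb, hyC⟩ := Set.not_subset.1 hball
        have hdy0 : 0 < Metric.infDist y C :=
          (hclosed.notMem_iff_infDist_pos hne).1 hyC
        set dy := Metric.infDist y C with hdy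
        have hdyε : dy < ε := lt_of_le_of_lt
          (le_trans (Metric.infDist_le_dist_of_mem hxC) (le_of_eq rfl)) hyb
        obtain ⟨q, hqC, hqd⟩ := hclosed.exists_infDist_eq_dist hne y
        have hdyq : dist y q = dy := hqd.symm
        have hl : 1 ≤ s / dy := by
          rw [le_div_iff₀ hdy0]
          have : dy ≤ s := le_of_lt (lt_of_lt_of_le hdyε (min_le_left _ _))
          linarith
        set z := q + (s / dy) • (y - q) with hz
        have hzd : Metric.infDist z C = s := by
          rw [hz, ray_infDist hne hconv hqC hdyq hl, hdyq]
          field_simp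
        have hzy : dist z y = s - dy := by
          rw [dist_eq_norm]
          have : z - y = (s / dy - 1) • (y - q) := by
            rw [hz]; module
          rw [this, norm_smul, Real.norm_eq_abs, abs_of_nonneg (by linarith),
            show ‖y - q‖ = dist y q from dist_eq_norm y q, hdyq]
          field_simp
        refine ⟨z, ?_, hzd⟩
        have h1 : dist z x ≤ dist z y + dist y x := dist_triangle z y x
        have h2 : dist y x < ε := hyb
        have h3 : ε ≤ (r - s) / 2 := min_le_right _ _
        rw [hzy] at h1
        linarith
      · -- move away along the ray through x
        have hdxp : dist x p = d := hpd.symm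
        have hl : 1 ≤ s / d := by rw [le_div_iff₀ hd0]; linarith
        set z := p + (s / d) • (x - p) with hz
        have hzd : Metric.infDist z C = s := by
          rw [hz, ray_infDist hne hconv hpC (by rw [hdxp, hdd]) hl, hdxp]
          exact div_mul_cancel₀ s (by rw [hdd]; exact hd0.ne' : d ≠ 0)
        have hzx : dist z x = s - d := by
          rw [dist_eq_norm]
          have : z - x = (s / d - 1) • (x - p) := by
            rw [hz]; module
          rw [this, norm_smul, Real.norm_eq_abs, abs_of_nonneg (by linarith),
            show ‖x - p‖ = dist x p from dist_eq_norm x p, hdxp]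
          field_simp [(by rw [hdd]; exact hd0.ne' : d ≠ 0)]
        exact ⟨z, by rw [hzx]; linarith, hzd⟩
end

section
/- There exists a universal constant c > 0 with the following property. Let n be arbitrary, let L be a closed subset of the Euclidean space ℝⁿ, let p ∈ L, and suppose that every point x in the open ball B_{10}(p) has a unique nearest point Π(x) in L (i.e. Π(x) ∈ L, d(x, Π(x)) = infDist(x, L), and any q ∈ L with d(x,q) = infDist(x, L) equals Π(x)). Then for every 0 < r ≤ 3, the nearest-point projection Π is (1 + c·r)-Lipschitz on the ball B_r(p): for all x₁, x₂ ∈ B_r(p), ‖Π(x₁) − Π(x₂)‖ ≤ (1 + c·r)·‖x₁ − x₂‖. -/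
open Metric RealInnerProductSpace Filter

lemma scalar_aux {N I B g h ε : ℝ} (hD2 : N^2 + 2*(h*I) + h^2 < (g + (1-ε)*h)^2)
    (hI : g - B ≤ I) (hN : g ≤ N) (hg : 0 < g) (hh : 0 < h)
    (hε0 : 0 < ε) (hε1 : ε < 1) : ε * g ≤ B := by
  have h1 : h*(g - B) ≤ h*I := mul_le_mul_of_nonneg_left hI hh.le
  have h2 : g^2 ≤ N^2 := by nlinarith
  have h3 : (1-ε)^2*h^2 ≤ h^2 := by
    nlinarith [mul_nonneg (mul_nonneg hε0.le (by linarith : (0:ℝ) ≤ 2 - ε)) (sq_nonneg h)]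
  have h4 : (g + (1-ε)*h)^2 = g^2 + 2*((1-ε)*(g*h)) + (1-ε)^2*h^2 := by ring
  have h5 : h*(g-B) < (1-ε)*(g*h) := by nlinarith
  have h6 : h*(ε*g) < h*B := by nlinarith
  exact le_of_lt (lt_of_mul_lt_mul_left h6 hh.le)

lemma scalar_aux2 {X δ r : ℝ} (h : X^2 ≤ (2*r)/(2*(10-2*r)) * X^2 + δ*X)
    (hX : 0 ≤ X) (hδ : 0 ≤ δ) (hr0 : 0 < r) (hr3 : r ≤ 3) : X ≤ (1+r)*δ := by
  have hρ : (0:ℝ) < 10 - 2*r := by linarith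
  have h1 := mul_le_mul_of_nonneg_right h hρ.le
  have h2 : ((2*r)/(2*(10-2*r)) * X^2 + δ*X) * (10-2*r) = r*X^2 + δ*X*(10-2*r) := by
    field_simp
  rw [h2] at h1
  have t1 : 0 ≤ δ*X*(r*(3-r)) :=
    mul_nonneg (mul_nonneg hδ hX) (mul_nonneg hr0.le (by linarith))
  have h3 : X^2*(10-3*r) ≤ δ*X*(10-2*r) := by linarith
  have h4 : δ*X*(10-2*r) ≤ δ*X*((1+r)*(10-3*r)) := by nlinarith [t1]
  have h5 : X^2*(10-3*r) ≤ (1+r)*δ*X*(10-3*r) := by nlinarith [h3, h4]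
  by_contra hc
  push_neg at hc
  have hδr : (0:ℝ) ≤ (1+r)*δ := mul_nonneg (by linarith) hδ
  have hX1 : 0 < X := lt_of_le_of_lt hδr hc
  have h6 : (1+r)*δ*X < X*X := mul_lt_mul_of_pos_right hc hX1
  have h7 : (0:ℝ) < 10-3*r := by linarith
  have h8 := mul_lt_mul_of_pos_right h6 h7
  nlinarith [h5, h8]

set_option maxHeartbeats 1000000 in
theorem key_ineq {n : ℕ} {L : Set (EuclideanSpace ℝ (Fin n))} {p : EuclideanSpace ℝ (Fin n)}
    {proj : EuclideanSpace ℝ (Fin n) → EuclideanSpace ℝ (Fin n)}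
    (hL : IsClosed L) (hp : p ∈ L)
    (hproj : ∀ x ∈ Metric.ball p 10, proj x ∈ L ∧ dist x (proj x) = Metric.infDist x L ∧
      ∀ q ∈ L, dist x q = Metric.infDist x L → q = proj x)
    {r : ℝ} (hr0 : 0 < r) (hr3 : r ≤ 3)
    {x : EuclideanSpace ℝ (Fin n)} (hx : x ∈ Metric.ball p r) :
    ∀ q ∈ L, ⟪x - proj x, q - proj x⟫ ≤
      (dist x (proj x) / (2 * (10 - 2*r))) * ‖q - proj x‖^2 := by
  intro q hq
  have hxp : dist x p < r := mem_ball.1 hx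
  have hx10 : x ∈ ball p 10 := mem_ball.2 (by linarith)
  obtain ⟨haL, hda, huniq⟩ := hproj x hx10
  obtain ⟨a, ha⟩ : ∃ a, a = proj x := ⟨_, rfl⟩
  obtain ⟨d, hdd⟩ : ∃ d : ℝ, d = dist x a := ⟨_, rfl⟩
  rw [← ha] at hda huniq haL ⊢
  rw [← hdd] at hda ⊢
  have hd_lt : d < r := by
    have h1 : Metric.infDist x L ≤ dist x p := Metric.infDist_le_dist_of_mem hp
    linarith [hda]
  have hd0 : 0 ≤ d := hdd ▸ dist_nonneg
  rcases eq_or_lt_of_le hd0 with hd | hd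
  · -- d = 0 : x = a
    have hxa : x = a := by rw [← dist_eq_zero, ← hdd, ← hd]
    rw [← hd, hxa]
    simp
  -- main case
  obtain ⟨ρ, hρdef⟩ : ∃ ρ : ℝ, ρ = 10 - 2*r := ⟨_, rfl⟩
  obtain ⟨T, hTdef⟩ : ∃ T : ℝ, T = ρ - d := ⟨_, rfl⟩
  have hρ4 : 4 ≤ ρ := by rw [hρdef]; linarith
  have hT0 : 0 < T := by rw [hTdef]; linarith
  -- Claim A
  have claimA : ∀ ε : ℝ, 0 < ε → ε < 1 →
      ∃ z, dist z x ≤ T ∧ d + (1-ε)*T ≤ Metric.infDist z L := by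
    intro ε hε0 hε1
    set S : Set ℝ := {t | t ∈ Set.Icc 0 T ∧ ∃ z, dist z x ≤ t ∧ d + (1-ε)*t ≤ Metric.infDist z L}
      with hSdef
    have hS0 : (0:ℝ) ∈ S := by
      refine ⟨⟨le_rfl, hT0.le⟩, x, by simp, ?_⟩
      rw [← hda, mul_zero, add_zero]
    have hSne : S.Nonempty := ⟨0, hS0⟩
    have hSbdd : BddAbove S := ⟨T, fun t ht => ht.1.2⟩
    obtain ⟨s, hs⟩ : ∃ s : ℝ, s = sSup S := ⟨_, rfl⟩
    have hs0 : 0 ≤ s := hs ▸ le_csSup hSbdd hS0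
    have hsT : s ≤ T := hs ▸ csSup_le hSne (fun t ht => ht.1.2)
    have hPs : ∃ z, dist z x ≤ s ∧ d + (1-ε)*s ≤ Metric.infDist z L := by
      have hex : ∀ k : ℕ, ∃ t, t ∈ S ∧ s - 1/((k:ℝ)+1) < t := by
        intro k
        have h1 : (0:ℝ) < 1/((k:ℝ)+1) := by positivity
        have h2 : s - 1/((k:ℝ)+1) < sSup S := by rw [← hs]; linarith
        obtain ⟨t, htS, ht⟩ := exists_lt_of_lt_csSup hSne h2
        exact ⟨t, htS, ht⟩
      choose tf htS htgt using hex
      choose zf hzf1 hzf2 using fun k => (htS k).2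
      have htle : ∀ k, tf k ≤ s := fun k => hs ▸ le_csSup hSbdd (htS k)
      have hmem : ∀ k, zf k ∈ Metric.closedBall x s :=
        fun k => mem_closedBall.2 ((hzf1 k).trans (htle k))
      obtain ⟨z, hzmem, φ, hφ, hconv⟩ := (isCompact_closedBall x s).tendsto_subseq hmem
      refine ⟨z, mem_closedBall.1 hzmem, ?_⟩
      have h1 : Tendsto (fun k => Metric.infDist (zf (φ k)) L) atTop
          (nhds (Metric.infDist z L)) := ((Metric.continuous_infDist_pt L).tendsto z).comp hconv
      have hφtop : Tendsto φ atTop atTop := hφ.tendsto_atTop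
      have hinv : Tendsto (fun k : ℕ => 1/((φ k:ℝ)+1)) atTop (nhds 0) :=
        tendsto_one_div_add_atTop_nhds_zero_nat.comp hφtop
      have h2 : Tendsto (fun k : ℕ => d + (1-ε)*(s - 1/((φ k:ℝ)+1))) atTop
          (nhds (d + (1-ε)*s)) := by
        have := ((tendsto_const_nhds (x := s)).sub hinv).const_mul (1-ε) |>.const_add d
        simpa using this
      refine le_of_tendsto_of_tendsto' h2 h1 (fun k => ?_)
      have h3 := htgt (φ k)
      have h4 := hzf2 (φ k)
      have h5 : (0:ℝ) ≤ 1 - ε := by linarith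
      have h6 := mul_le_mul_of_nonneg_left h3.le h5
      linarith
    obtain ⟨z, hz1, hz2⟩ := hPs
    rcases eq_or_lt_of_le hsT with heq | hlt
    · exact ⟨z, heq ▸ hz1, heq ▸ hz2⟩
    exfalso
    obtain ⟨g, hgdef⟩ : ∃ g:ℝ, g = Metric.infDist z L := ⟨_, rfl⟩
    rw [← hgdef] at hz2
    have hg0 : 0 < g := by
      have := mul_nonneg (by linarith : (0:ℝ) ≤ 1-ε) hs0
      linarith
    have hz10 : z ∈ ball p 10 := by
      rw [mem_ball]
      calc dist z p ≤ dist z x + dist x p := dist_triangle z x p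
        _ < T + r := by linarith
        _ < 10 := by rw [hTdef, hρdef]; linarith
    obtain ⟨hbL, hgb, huniqz⟩ := hproj z hz10
    obtain ⟨b, hb⟩ : ∃ b, b = proj z := ⟨_, rfl⟩
    rw [← hb] at hbL hgb huniqz
    rw [← hgdef] at hgb huniqz
    have hzbn : ‖z - b‖ = g := by rw [← dist_eq_norm]; exact hgb
    obtain ⟨w, hw⟩ : ∃ w, w = g⁻¹ • (z - b) := ⟨_, rfl⟩
    have hnw : ‖w‖ = 1 := by
      rw [hw, norm_smul, Real.norm_eq_abs, abs_inv, abs_of_pos hg0, hzbn]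
      field_simp
    have claimB : ∃ h : ℝ, 0 < h ∧ h ≤ T - s ∧
        g + (1-ε)*h ≤ Metric.infDist (z + h • w) L := by
      by_contra hcon
      push_neg at hcon
      obtain ⟨H, hH⟩ : ∃ H : ℝ, H = T - s := ⟨_, rfl⟩
      have hH0 : 0 < H := by rw [hH]; linarith
      have hhk : ∀ k:ℕ, 0 < H/((k:ℝ)+1) ∧ H/((k:ℝ)+1) ≤ T - s := by
        intro k
        constructor
        · positivity
        · rw [← hH]; exact div_le_self hH0.le (by norm_num [Nat.cast_nonneg])
      have hexq : ∀ k : ℕ, ∃ qk ∈ L,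
          Metric.infDist (z + (H/((k:ℝ)+1)) • w) L = dist (z + (H/((k:ℝ)+1)) • w) qk :=
        fun k => hL.exists_infDist_eq_dist ⟨p, hp⟩ _
      choose qf hqL hqd using hexq
      have hdyz : ∀ k : ℕ, dist (z + (H/((k:ℝ)+1)) • w) z = H/((k:ℝ)+1) := by
        intro k
        rw [dist_eq_norm]
        have : z + (H/((k:ℝ)+1)) • w - z = (H/((k:ℝ)+1)) • w := by abel
        rw [this, norm_smul, hnw, Real.norm_eq_abs, abs_of_pos (hhk k).1, mul_one]
      have hqb : ∀ k, qf k ∈ Metric.closedBall z (g + 2*H) := by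
        intro k
        rw [mem_closedBall]
        have h2 := hcon (H/((k:ℝ)+1)) (hhk k).1 (hhk k).2
        have h4 : H/((k:ℝ)+1) ≤ H := div_le_self hH0.le (by norm_num [Nat.cast_nonneg])
        calc dist (qf k) z ≤ dist (qf k) (z + (H/((k:ℝ)+1)) • w)
              + dist (z + (H/((k:ℝ)+1)) • w) z := dist_triangle _ _ _
          _ ≤ (g + (1-ε)*(H/((k:ℝ)+1))) + H/((k:ℝ)+1) := by
              rw [dist_comm (qf k), hdyz k]
              have := (hqd k) ▸ h2
              linarith [(hqd k).symm.trans_lt h2]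
          _ ≤ g + 2*H := by
              have h5 := (hhk k).1
              have h6 : (1-ε)*(H/((k:ℝ)+1)) ≤ 1*(H/((k:ℝ)+1)) :=
                mul_le_mul_of_nonneg_right (by linarith) h5.le
              linarith
      obtain ⟨qbar, hqbarmem, φ, hφ, hconv⟩ :=
        (isCompact_closedBall z (g + 2*H)).tendsto_subseq hqb
      have hqbarL : qbar ∈ L := hL.mem_of_tendsto hconv
        (Filter.Eventually.of_forall fun k => hqL _)
      have hφtop : Tendsto φ atTop atTop := hφ.tendsto_atTop
      have hcH : Tendsto (fun k : ℕ => H/((φ k:ℝ)+1)) atTop (nhds 0) := by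
        have hinv : Tendsto (fun k : ℕ => 1/((φ k:ℝ)+1)) atTop (nhds 0) :=
          tendsto_one_div_add_atTop_nhds_zero_nat.comp hφtop
        have := hinv.const_mul H
        simpa [div_eq_mul_inv, one_div, mul_comm] using this
      have hytend : Tendsto (fun k : ℕ => z + (H/((φ k:ℝ)+1)) • w) atTop (nhds z) := by
        have := hcH.smul_const w
        have h2 := tendsto_const_nhds (x := z) (f := atTop (α := ℕ)) |>.add this
        simpa using h2
      have hdisttend : Tendsto (fun k => dist (z + (H/((φ k:ℝ)+1)) • w) (qf (φ k))) atTop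
          (nhds (dist z qbar)) := hytend.dist hconv
      have hinf2 : Tendsto (fun k => Metric.infDist (z + (H/((φ k:ℝ)+1)) • w) L) atTop
          (nhds (Metric.infDist z L)) := ((Metric.continuous_infDist_pt L).tendsto z).comp hytend
      have hdist3 : Tendsto (fun k => Metric.infDist (z + (H/((φ k:ℝ)+1)) • w) L) atTop
          (nhds (dist z qbar)) := by
        simpa only [fun k => hqd (φ k)] using hdisttend
      have hzqbar : dist z qbar = Metric.infDist z L := tendsto_nhds_unique hdist3 hinf2
      have hqbar_b : qbar = b := huniqz qbar hqbarL (by rw [hzqbar, hgdef])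
      -- quantitative lower bound
      have hlow : ∀ k : ℕ, ε * g ≤ ‖b - qf k‖ := by
        intro k
        obtain ⟨h, hhdef⟩ : ∃ h : ℝ, h = H/((k:ℝ)+1) := ⟨_, rfl⟩
        have hh0 : 0 < h := hhdef ▸ (hhk k).1
        have hyq : dist (z + h • w) (qf k) < g + (1-ε)*h := by
          rw [hhdef]
          rw [← hqd k]
          exact hcon _ (hhk k).1 (hhk k).2
        have hgzq : g ≤ ‖z - qf k‖ := by
          rw [hgdef, ← dist_eq_norm]
          exact Metric.infDist_le_dist_of_mem (hqL k)
        have e1 : ‖(z - qf k) + h • w‖^2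
            = ‖z - qf k‖^2 + 2*⟪z - qf k, h • w⟫ + ‖h • w‖^2 := norm_add_sq_real _ _
        have e2 : (z - qf k) + h • w = (z + h • w) - qf k := by abel
        rw [e2] at e1
        have e3 : ⟪z - qf k, h • w⟫ = h * ⟪w, z - qf k⟫ := by
          rw [real_inner_smul_right, real_inner_comm]
        have e4 : ‖h • w‖ = h := by
          rw [norm_smul, hnw, Real.norm_eq_abs, abs_of_pos hh0, mul_one]
        have e5 : ⟪w, z - qf k⟫ = ⟪w, z - b⟫ + ⟪w, b - qf k⟫ := by
          rw [← inner_add_right]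
          congr 1
          abel
        have e6 : ⟪w, z - b⟫ = g := by
          rw [hw, real_inner_smul_left, real_inner_self_eq_norm_sq, hzbn]
          field_simp
        have e7 : -‖b - qf k‖ ≤ ⟪w, b - qf k⟫ := by
          have h1 : ⟪w, qf k - b⟫ ≤ ‖w‖ * ‖qf k - b‖ := real_inner_le_norm _ _
          have h2 : ⟪w, b - qf k⟫ = - ⟪w, qf k - b⟫ := by
            rw [show b - qf k = -(qf k - b) by abel, inner_neg_right]
          rw [hnw, one_mul] at h1
          rw [h2]
          have h3 : ‖b - qf k‖ = ‖qf k - b‖ := norm_sub_rev _ _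
          linarith
        have e8 : dist (z + h • w) (qf k) = ‖(z + h • w) - qf k‖ := dist_eq_norm _ _
        have hD0 : 0 ≤ dist (z + h • w) (qf k) := dist_nonneg
        have hgh : 0 < g + (1-ε)*h := by
          have := mul_pos (by linarith : (0:ℝ) < 1-ε) hh0
          linarith
        have hD2 : ‖(z + h • w) - qf k‖^2 < (g + (1-ε)*h)^2 := by
          rw [← e8, pow_two, pow_two]
          exact mul_self_lt_mul_self hD0 hyq
        rw [e1, e3, e4] at hD2
        refine scalar_aux hD2 ?_ hgzq hg0 hh0 hε0 hε1
        rw [e5, e6]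
        linarith [e7]
      have hlim : Tendsto (fun k => ‖b - qf (φ k)‖) atTop (nhds 0) := by
        have := (tendsto_const_nhds (x := b) (f := atTop (α := ℕ))).sub hconv
        have h2 := this.norm
        rw [hqbar_b] at h2
        simpa using h2
      have : ε * g ≤ 0 :=
        le_of_tendsto_of_tendsto' tendsto_const_nhds hlim (fun k => hlow (φ k))
      have := mul_pos hε0 hg0
      linarith
    obtain ⟨h, hh0, hhTs, hhinf⟩ := claimB
    have hshS : s + h ∈ S := by
      refine ⟨⟨by linarith, by linarith⟩, z + h • w, ?_, ?_⟩
      · calc dist (z + h • w) x ≤ dist (z + h • w) z + dist z x := dist_triangle _ _ _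
          _ ≤ h + s := by
              have : z + h • w - z = h • w := by abel
              rw [dist_eq_norm, this, norm_smul, hnw, Real.norm_eq_abs,
                abs_of_pos hh0, mul_one]
              linarith
          _ = s + h := by ring
      · calc d + (1-ε)*(s+h) = (d + (1-ε)*s) + (1-ε)*h := by ring
          _ ≤ g + (1-ε)*h := by linarith
          _ ≤ Metric.infDist (z + h • w) L := hhinf
    have := hs ▸ le_csSup hSbdd hshS
    linarith
  -- extract limit point z*
  have claimZ : ∃ z, dist z x ≤ T ∧ d + T ≤ Metric.infDist z L := by
    have hAk : ∀ k : ℕ, ∃ z, dist z x ≤ T ∧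
        d + (1 - 1/((k:ℝ)+2))*T ≤ Metric.infDist z L := by
      intro k
      apply claimA
      · positivity
      · rw [div_lt_one (by positivity)]
        have : (0:ℝ) ≤ (k:ℝ) := Nat.cast_nonneg k
        linarith
    choose zf hzf1 hzf2 using hAk
    have hmem : ∀ k, zf k ∈ Metric.closedBall x T := fun k => mem_closedBall.2 (hzf1 k)
    obtain ⟨z, hzmem, φ, hφ, hconv⟩ := (isCompact_closedBall x T).tendsto_subseq hmem
    refine ⟨z, mem_closedBall.1 hzmem, ?_⟩
    have h1 : Tendsto (fun k => Metric.infDist (zf (φ k)) L) atTop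
        (nhds (Metric.infDist z L)) := ((Metric.continuous_infDist_pt L).tendsto z).comp hconv
    have hφtop : Tendsto φ atTop atTop := hφ.tendsto_atTop
    have hinv : Tendsto (fun k : ℕ => 1/((φ k:ℝ)+2)) atTop (nhds 0) := by
      have h2 : Tendsto (fun k : ℕ => ((k:ℝ)+2)) atTop atTop :=
        tendsto_atTop_add_const_right _ 2 tendsto_natCast_atTop_atTop
      have := (h2.comp hφtop).inv_tendsto_atTop
      simpa [one_div, Function.comp_def, Pi.inv_def] using this
    have h2 : Tendsto (fun k : ℕ => d + (1 - 1/((φ k:ℝ)+2))*T) atTop (nhds (d + T)) := by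
      have := ((tendsto_const_nhds (x := (1:ℝ))).sub hinv).mul_const T |>.const_add d
      simpa using this
    exact le_of_tendsto_of_tendsto' h2 h1 (fun k => hzf2 (φ k))
  obtain ⟨z, hz1, hz2⟩ := claimZ
  -- equalities
  have hax : ‖x - a‖ = d := by rw [hdd, dist_eq_norm]
  have htri : ‖z - a‖ ≤ ‖z - x‖ + ‖x - a‖ := by
    have h := dist_triangle z x a
    rwa [dist_eq_norm, dist_eq_norm, dist_eq_norm] at h
  have hzxT : ‖z - x‖ ≤ T := by rw [← dist_eq_norm]; exact hz1
  have hza_ge : d + T ≤ ‖z - a‖ := by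
    have h := Metric.infDist_le_dist_of_mem haL (x := z)
    rw [dist_eq_norm] at h; linarith
  have hza : ‖z - a‖ = d + T := by
    apply le_antisymm _ hza_ge
    calc ‖z - a‖ ≤ ‖z - x‖ + ‖x - a‖ := htri
      _ ≤ T + d := by rw [hax]; linarith
      _ = d + T := by ring
  have hzx : ‖z - x‖ = T := by nlinarith [hza, hax, htri]
  -- inner product equality : ⟪x-a, z-x⟫ = d*T
  have hinner : ⟪x - a, z - x⟫ = d * T := by
    have hexp : ‖(x - a) + (z - x)‖^2 = ‖x-a‖^2 + 2*⟪x-a, z-x⟫ + ‖z-x‖^2 :=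
      norm_add_sq_real _ _
    have hab : (x - a) + (z - x) = z - a := by abel
    rw [hab] at hexp
    nlinarith [hza, hax, hzx]
  -- colinearity: z - a = ((d+T)/d) • (x - a)
  have hcol : z - a = ((d+T)/d) • (x - a) := by
    have hn : ‖(z - x) - (T/d) • (x - a)‖^2 = 0 := by
      rw [norm_sub_sq_real, real_inner_smul_right, norm_smul]
      rw [Real.norm_eq_abs, abs_of_nonneg (by positivity : (0:ℝ) ≤ T/d)]
      have hcomm : ⟪z - x, x - a⟫ = ⟪x - a, z - x⟫ := real_inner_comm _ _
      rw [mul_pow, hax, hzx, hcomm, hinner]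
      field_simp
      ring
    have hzz : (z - x) - (T/d) • (x - a) = 0 :=
      norm_eq_zero.1 (pow_eq_zero_iff (n := 2) (by norm_num) |>.1 hn)
    have hzx2 : z - x = (T/d) • (x - a) := by rwa [sub_eq_zero] at hzz
    have hsum : z - a = (z - x) + (x - a) := by abel
    have hco : (d+T)/d = T/d + 1 := by field_simp; ring
    rw [hsum, hzx2, hco, add_smul, one_smul]
  -- final inequality
  have hq2 : d + T ≤ ‖z - q‖ := by
    have h := Metric.infDist_le_dist_of_mem hq (x := z)
    rw [dist_eq_norm] at h; linarith
  have hexp : ‖(z - a) - (q - a)‖^2 = ‖z-a‖^2 - 2*⟪z-a, q-a⟫ + ‖q-a‖^2 :=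
    norm_sub_sq_real _ _
  have hzq : (z - a) - (q - a) = z - q := by abel
  rw [hzq] at hexp
  have hdT0 : (0:ℝ) < d + T := by linarith
  have hsq : (d+T)^2 ≤ ‖z - q‖^2 := by nlinarith [norm_nonneg (z - q)]
  have hkey : ⟪z - a, q - a⟫ ≤ ‖q - a‖^2 / 2 := by nlinarith [hexp, hza]
  have hzaq : ⟪z - a, q - a⟫ = ((d+T)/d) * ⟪x - a, q - a⟫ := by
    rw [hcol, real_inner_smul_left]
  have hfrac : ⟪x - a, q - a⟫ = (d/(d+T)) * ⟪z - a, q - a⟫ := by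
    rw [hzaq]; field_simp
  rw [hfrac]
  calc (d/(d+T)) * ⟪z - a, q - a⟫ ≤ (d/(d+T)) * (‖q - a‖^2 / 2) :=
        mul_le_mul_of_nonneg_left hkey (by positivity)
    _ = (d / (2 * (10 - 2*r))) * ‖q - a‖^2 := by
        have h1 : d + T = 10 - 2*r := by rw [hTdef, hρdef]; ring
        rw [h1, show (2*(10-2*r):ℝ) = (10-2*r)*2 by ring, ← div_div]
        ring



set_option maxHeartbeats 1000000 in
/-- There is a universal constant `c > 0` such that: whenever `L` is a closed subset
of Euclidean space `ℝⁿ` containing a point `p`, and every point of the open ball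
`B₁₀(p)` has a unique nearest point `Π x` in `L`, then for every `0 < r ≤ 3` the
nearest-point projection `Π` is `(1 + c·r)`-Lipschitz on `B_r(p)`. -/
theorem nearestPoint_projection_lipschitz :
    ∃ c : ℝ, 0 < c ∧
      ∀ (n : ℕ) (L : Set (EuclideanSpace ℝ (Fin n))) (p : EuclideanSpace ℝ (Fin n))
        (proj : EuclideanSpace ℝ (Fin n) → EuclideanSpace ℝ (Fin n)),
        IsClosed L → p ∈ L →
        (∀ x ∈ Metric.ball p 10,
          proj x ∈ L ∧ dist x (proj x) = Metric.infDist x L ∧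
            ∀ q ∈ L, dist x q = Metric.infDist x L → q = proj x) →
        ∀ r : ℝ, 0 < r → r ≤ 3 →
          ∀ x₁ ∈ Metric.ball p r, ∀ x₂ ∈ Metric.ball p r,
            dist (proj x₁) (proj x₂) ≤ (1 + c * r) * dist x₁ x₂ := by
  refine ⟨1, one_pos, ?_⟩
  intro n L p proj hL hp hproj r hr0 hr3 x₁ hx₁ x₂ hx₂
  have hx₁p : dist x₁ p < r := mem_ball.1 hx₁
  have hx₂p : dist x₂ p < r := mem_ball.1 hx₂
  have hx₁10 : x₁ ∈ ball p 10 := mem_ball.2 (by linarith)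
  have hx₂10 : x₂ ∈ ball p 10 := mem_ball.2 (by linarith)
  obtain ⟨haL, hd1, -⟩ := hproj x₁ hx₁10
  obtain ⟨hbL, hd2, -⟩ := hproj x₂ hx₂10
  have k1 := key_ineq hL hp hproj hr0 hr3 hx₁ (proj x₂) hbL
  have k2 := key_ineq hL hp hproj hr0 hr3 hx₂ (proj x₁) haL
  obtain ⟨a, haa⟩ : ∃ a, a = proj x₁ := ⟨_, rfl⟩
  obtain ⟨b, hbb⟩ : ∃ b, b = proj x₂ := ⟨_, rfl⟩
  rw [← haa] at haL hd1 k1 k2 ⊢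
  rw [← hbb] at hbL hd2 k1 k2 ⊢
  -- distances to projections are < r
  have hda : dist x₁ a ≤ r := by
    have := Metric.infDist_le_dist_of_mem hp (x := x₁)
    linarith [hd1]
  have hdb : dist x₂ b ≤ r := by
    have := Metric.infDist_le_dist_of_mem hp (x := x₂)
    linarith [hd2]
  have hρ : (0:ℝ) < 10 - 2*r := by linarith
  -- decomposition of ‖a-b‖²
  have hsplit : ‖a - b‖^2 = ⟪x₁ - a, b - a⟫ + ⟪x₁ - x₂, a - b⟫ + ⟪x₂ - b, a - b⟫ := by
    have h1 : ‖a - b‖^2 = ⟪a - b, a - b⟫ := (real_inner_self_eq_norm_sq _).symm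
    have h2 : a - b = (a - x₁) + ((x₁ - x₂) + (x₂ - b)) := by abel
    rw [h1]
    nth_rewrite 1 [h2]
    rw [inner_add_left, inner_add_left]
    have h3 : ⟪a - x₁, a - b⟫ = ⟪x₁ - a, b - a⟫ := by
      rw [show a - x₁ = -(x₁ - a) by abel, show a - b = -(b - a) by abel,
        inner_neg_neg]
    rw [h3]
    ring
  have hCS : ⟪x₁ - x₂, a - b⟫ ≤ dist x₁ x₂ * ‖a - b‖ := by
    have := real_inner_le_norm (x₁ - x₂) (a - b)
    rw [← dist_eq_norm] at this
    linarith
  have hrev : ‖b - a‖ = ‖a - b‖ := norm_sub_rev _ _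
  rw [hrev] at k1
  have hX0 : (0:ℝ) ≤ ‖a - b‖ := norm_nonneg _
  have hδ0 : (0:ℝ) ≤ dist x₁ x₂ := dist_nonneg
  -- combine
  have hcomb : ‖a - b‖^2 ≤ (dist x₁ a + dist x₂ b)/(2*(10-2*r)) * ‖a - b‖^2
      + dist x₁ x₂ * ‖a - b‖ := by
    calc ‖a - b‖^2 = ⟪x₁ - a, b - a⟫ + ⟪x₁ - x₂, a - b⟫ + ⟪x₂ - b, a - b⟫ := hsplit
      _ ≤ dist x₁ a / (2*(10-2*r)) * ‖a-b‖^2 + dist x₁ x₂ * ‖a - b‖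
          + dist x₂ b / (2*(10-2*r)) * ‖a-b‖^2 := by linarith [k1, hCS, k2]
      _ = (dist x₁ a + dist x₂ b)/(2*(10-2*r)) * ‖a - b‖^2 + dist x₁ x₂ * ‖a - b‖ := by
          ring
  have hmono : (dist x₁ a + dist x₂ b)/(2*(10-2*r)) * ‖a - b‖^2
      ≤ (2*r)/(2*(10-2*r)) * ‖a - b‖^2 := by
    apply mul_le_mul_of_nonneg_right _ (sq_nonneg _)
    exact (div_le_div_iff_of_pos_right (by positivity)).2 (by linarith)
  have hstep : ‖a - b‖^2 ≤ (2*r)/(2*(10-2*r)) * ‖a - b‖^2 + dist x₁ x₂ * ‖a - b‖ := by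
    linarith
  have hfin := scalar_aux2 hstep hX0 hδ0 hr0 hr3
  rw [dist_eq_norm, one_mul]
  exact hfin
end
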